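/- Let K be a field with an additive real-valued valuation v, and let P ∈ K[X] be a monic polynomial of degree d ≥ 1 that splits in K, say P = ∏_{j=1}^d (X − α_j) with α_j ∈ K. Then for every t ∈ ℝ one has min{ v(c_i) + i·t : 0 ≤ i ≤ d, c_i ≠ 0 } = Σ_{j=1}^d min{ v(α_j), t }, where c_i denotes the coefficient of X^i in P. -/

import Mathlib

open Polynomial

namespace Statement8Aux

noncomputable def ee (t : ℝ) (i : ℕ) : WithTop ℝ := (((i : ℝ) * t : ℝ) : WithTop ℝ)

lemma ee0 (t : ℝ) : ee t 0 = 0 := by simp [ee]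

lemma eesucc (t : ℝ) (n : ℕ) : ee t (n + 1) = ee t n + (t : WithTop ℝ) := by
  simp only [ee]
  rw [← WithTop.coe_add]
  norm_cast
  push_cast
  ring

lemma ee_ne_top (t : ℝ) (i : ℕ) : ee t i ≠ ⊤ := WithTop.coe_ne_top

lemma minadd (a b c : WithTop ℝ) : min a b + c = min (a + c) (b + c) := by
  rcases le_total a b with h | h
  · rw [min_eq_left h, min_eq_left (add_le_add_left h c)]
  · rw [min_eq_right h, min_eq_right (add_le_add_left h c)]

variable {K : Type*} [Field K] (v : K → WithTop ℝ)
  (hv0 : ∀ x : K, v x = ⊤ ↔ x = 0)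
  (hvmul : ∀ x y : K, v (x * y) = v x + v y)
  (hvadd : ∀ x y : K, min (v x) (v y) ≤ v (x + y))

include hv0 hvmul in
lemma vone : v 1 = 0 := by
  have h := hvmul 1 1
  rw [one_mul] at h
  have h1 : v 1 ≠ ⊤ := by simp [hv0]
  lift v 1 to ℝ using h1 with r hr
  have : r = r + r := by exact_mod_cast h
  have hz : r = 0 := by linarith
  exact_mod_cast hz

include hv0 hvmul in
lemma vneg (x : K) : v (-x) = v x := by
  have hm1 : v (-1 : K) = 0 := by
    have h := hvmul (-1 : K) (-1)
    rw [neg_one_mul, neg_neg, vone v hv0 hvmul] at h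
    have h1 : v (-1 : K) ≠ ⊤ := by simp [hv0]
    lift v (-1 : K) to ℝ using h1 with r hr
    have : (0 : ℝ) = r + r := by exact_mod_cast h
    have hz : r = 0 := by linarith
    exact_mod_cast hz
  rw [show -x = (-1 : K) * x by ring, hvmul, hm1, zero_add]

include hv0 hvmul hvadd in
lemma vsub_left {x y : K} (h : v x < v y) : v (x - y) = v x := by
  have hvy : v (-y) = v y := vneg v hv0 hvmul y
  have h1 : v x ≤ v (x - y) := by
    have h' := hvadd x (-y)
    rw [hvy, ← sub_eq_add_neg] at h'
    exact le_trans (le_min le_rfl h.le) h'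
  have h2 : v (x - y) ≤ v x := by
    by_contra hc
    push_neg at hc
    have h' := hvadd (x - y) y
    rw [sub_add_cancel] at h'
    exact absurd h' (not_le_of_gt (lt_min hc h))
  exact le_antisymm h2 h1

include hv0 hvmul hvadd in
lemma vsub_right {x y : K} (h : v y < v x) : v (x - y) = v y := by
  rw [show x - y = -(y - x) by ring, vneg v hv0 hvmul,
    vsub_left v hv0 hvmul hvadd h]

lemma coeffR0 (a : K) (Q : K[X]) : ((X - C a) * Q).coeff 0 = -(a * Q.coeff 0) := by
  simp [sub_mul, coeff_sub, mul_coeff_zero, coeff_C_mul]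

lemma coeffRsucc (a : K) (Q : K[X]) (n : ℕ) :
    ((X - C a) * Q).coeff (n + 1) = Q.coeff n - a * Q.coeff (n + 1) := by
  rw [sub_mul, coeff_sub, coeff_X_mul, coeff_C_mul]

-- Key step: multiplying by `X - C a` adds `min (v a) t` to the Gauss valuation.
include hv0 hvmul hvadd in
lemma step (t : ℝ) (a : K) (Q : K[X]) (m : WithTop ℝ) (hm : m ≠ ⊤)
    (hex : ∃ i, v (Q.coeff i) + ee t i = m)
    (hlb : ∀ i, m ≤ v (Q.coeff i) + ee t i) :
    (∃ i, v (((X - C a) * Q).coeff i) + ee t i = min (v a) (t : WithTop ℝ) + m)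
    ∧ ∀ i, min (v a) (t : WithTop ℝ) + m ≤ v (((X - C a) * Q).coeff i) + ee t i := by
  constructor
  · -- existence of an achieving index
    rcases le_or_gt (t : WithTop ℝ) (v a) with h | h
    · -- min = t : use the LARGEST achieving index i₀, then index i₀+1 achieves
      rw [min_eq_right h]
      have hSne : ∃ i ∈ Q.support, v (Q.coeff i) + ee t i = m := by
        obtain ⟨i, hi⟩ := hex
        refine ⟨i, ?_, hi⟩
        rw [mem_support_iff]
        intro h0
        rw [h0, (hv0 0).mpr rfl, top_add] at hi
        exact hm hi.symm
      set S : Finset ℕ := Q.support.filter (fun i => v (Q.coeff i) + ee t i = m) with hS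
      have hSne' : S.Nonempty := by
        obtain ⟨i, hi1, hi2⟩ := hSne
        exact ⟨i, Finset.mem_filter.mpr ⟨hi1, hi2⟩⟩
      set i₀ := S.max' hSne' with hi₀def
      have hi₀S := S.max'_mem hSne'
      have hm₀ : v (Q.coeff i₀) + ee t i₀ = m := (Finset.mem_filter.mp hi₀S).2
      have hnot : v (Q.coeff (i₀ + 1)) + ee t (i₀ + 1) ≠ m := by
        intro hEq
        by_cases hc : Q.coeff (i₀ + 1) = 0
        · rw [hc, (hv0 0).mpr rfl, top_add] at hEq
          exact hm hEq.symm
        · have : i₀ + 1 ∈ S :=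
            Finset.mem_filter.mpr ⟨mem_support_iff.mpr hc, hEq⟩
          have := S.le_max' _ this
          omega
      have hgt : m < v (Q.coeff (i₀ + 1)) + ee t (i₀ + 1) :=
        lt_of_le_of_ne (hlb _) (Ne.symm hnot)
      -- deduce v (Q.coeff i₀) < v (a * Q.coeff (i₀+1))
      have hkey : v (Q.coeff i₀) < v (a * Q.coeff (i₀ + 1)) := by
        rw [hvmul]
        have h1 : v (Q.coeff i₀) + ee t i₀ < (↑t + v (Q.coeff (i₀ + 1))) + ee t i₀ := by
          rw [hm₀]
          calc m < v (Q.coeff (i₀ + 1)) + ee t (i₀ + 1) := hgt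
            _ = (↑t + v (Q.coeff (i₀ + 1))) + ee t i₀ := by
                rw [eesucc]; abel
        have h2 := (WithTop.add_lt_add_iff_right (ee_ne_top t i₀)).mp h1
        calc v (Q.coeff i₀) < ↑t + v (Q.coeff (i₀ + 1)) := h2
          _ ≤ v a + v (Q.coeff (i₀ + 1)) := add_le_add_left h _
      refine ⟨i₀ + 1, ?_⟩
      rw [coeffRsucc, vsub_left v hv0 hvmul hvadd hkey, eesucc, ← add_assoc, hm₀,
        add_comm]
    · -- min = v a : any achieving index works
      rw [min_eq_left h.le]
      obtain ⟨i, hi⟩ := hex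
      refine ⟨i, ?_⟩
      cases i with
      | zero =>
          rw [coeffR0, vneg v hv0 hvmul, hvmul, ee0, add_zero] at *
          rw [hi]
      | succ n =>
          have hkey : v (a * Q.coeff (n + 1)) < v (Q.coeff n) := by
            rw [hvmul]
            have h1 : (v a + v (Q.coeff (n + 1))) + ee t (n + 1)
                < v (Q.coeff n) + ee t (n + 1) := by
              calc (v a + v (Q.coeff (n + 1))) + ee t (n + 1)
                  = v a + m := by rw [add_assoc, hi]
                _ < ↑t + m := by
                    rcases WithTop.ne_top_iff_exists.mp hm with ⟨r, hr⟩
                    rw [← hr]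
                    exact (WithTop.add_lt_add_iff_right WithTop.coe_ne_top).mpr h
                _ ≤ (v (Q.coeff n) + ee t n) + ↑t := by
                    rw [add_comm]
                    exact add_le_add_left (hlb n) _
                _ = v (Q.coeff n) + ee t (n + 1) := by rw [eesucc, add_assoc]
            exact (WithTop.add_lt_add_iff_right (ee_ne_top t (n + 1))).mp h1
          rw [coeffRsucc, vsub_right v hv0 hvmul hvadd hkey, hvmul, add_assoc, hi]
  · -- lower bound
    intro i
    cases i with
    | zero =>
        rw [coeffR0, vneg v hv0 hvmul, hvmul, ee0, add_zero]
        have := hlb 0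
        rw [ee0, add_zero] at this
        exact add_le_add (min_le_left _ _) this
    | succ n =>
        rw [coeffRsucc]
        have hv := hvadd (Q.coeff n) (-(a * Q.coeff (n + 1)))
        rw [vneg v hv0 hvmul, ← sub_eq_add_neg] at hv
        have h1 : min (v a) (t : WithTop ℝ) + m ≤ v (Q.coeff n) + ee t (n + 1) := by
          calc min (v a) (t : WithTop ℝ) + m ≤ ↑t + (v (Q.coeff n) + ee t n) :=
                add_le_add (min_le_right _ _) (hlb n)
            _ = v (Q.coeff n) + ee t (n + 1) := by rw [eesucc]; abel
        have h2 : min (v a) (t : WithTop ℝ) + m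
            ≤ v (a * Q.coeff (n + 1)) + ee t (n + 1) := by
          rw [hvmul, add_assoc]
          exact add_le_add (min_le_left _ _) (hlb (n + 1))
        calc min (v a) (t : WithTop ℝ) + m
            ≤ min (v (Q.coeff n) + ee t (n + 1))
                (v (a * Q.coeff (n + 1)) + ee t (n + 1)) := le_min h1 h2
          _ = min (v (Q.coeff n)) (v (a * Q.coeff (n + 1))) + ee t (n + 1) :=
              (minadd _ _ _).symm
          _ ≤ v (Q.coeff n - a * Q.coeff (n + 1)) + ee t (n + 1) :=
              add_le_add_left hv _

include hv0 hvmul hvadd in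
lemma prodG (t : ℝ) {d : ℕ} (α : Fin d → K) (s : Finset (Fin d)) :
    (∑ j ∈ s, min (v (α j)) ((t : ℝ) : WithTop ℝ)) ≠ ⊤ ∧
    (∃ i, v ((∏ j ∈ s, (X - C (α j))).coeff i) + ee t i
        = ∑ j ∈ s, min (v (α j)) ((t : ℝ) : WithTop ℝ)) ∧
    ∀ i, (∑ j ∈ s, min (v (α j)) ((t : ℝ) : WithTop ℝ))
        ≤ v ((∏ j ∈ s, (X - C (α j))).coeff i) + ee t i := by
  classical
  induction s using Finset.induction_on with
  | empty =>
      refine ⟨by simp, ⟨0, ?_⟩, ?_⟩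
      · simp [ee0, vone v hv0 hvmul]
      · intro i
        cases i with
        | zero => simp [ee0, vone v hv0 hvmul]
        | succ n => simp [coeff_one, (hv0 0).mpr rfl, top_add]
  | insert a s ha ih =>
      obtain ⟨hnt, hex, hlb⟩ := ih
      rw [Finset.prod_insert ha, Finset.sum_insert ha]
      have hmin_nt : min (v (α a)) ((t : ℝ) : WithTop ℝ) ≠ ⊤ :=
        ne_top_of_le_ne_top WithTop.coe_ne_top (min_le_right _ _)
      obtain ⟨hex', hlb'⟩ := step v hv0 hvmul hvadd t (α a) _ _ hnt hex hlb
      exact ⟨WithTop.add_ne_top.mpr ⟨hmin_nt, hnt⟩, hex', hlb'⟩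

end Statement8Aux

open Statement8Aux in
theorem statement8 {K : Type*} [Field K]
    (v : K → WithTop ℝ)
    (hv0 : ∀ x : K, v x = ⊤ ↔ x = 0)
    (hvmul : ∀ x y : K, v (x * y) = v x + v y)
    (hvadd : ∀ x y : K, min (v x) (v y) ≤ v (x + y))
    {d : ℕ} (hd : 1 ≤ d) (α : Fin d → K) (P : K[X])
    (hP : P = ∏ j : Fin d, (X - C (α j))) :
    ∀ t : ℝ,
      IsLeast {x : WithTop ℝ | ∃ i : ℕ, P.coeff i ≠ 0 ∧
          x = v (P.coeff i) + (((i : ℝ) * t : ℝ) : WithTop ℝ)}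
        (∑ j : Fin d, min (v (α j)) ((t : ℝ) : WithTop ℝ)) := by
  intro t
  obtain ⟨hnt, ⟨i, hi⟩, hlb⟩ :=
    prodG v hv0 hvmul hvadd t α (Finset.univ : Finset (Fin d))
  subst hP
  constructor
  · refine ⟨i, ?_, ?_⟩
    · intro h0
      rw [h0, (hv0 0).mpr rfl, top_add] at hi
      exact hnt hi.symm
    · exact hi.symm
  · rintro x ⟨j, hj, rfl⟩
    exact hlb j
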